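/- arXiv:1811.02150 — 2 statements merged into one kernel-verified Lean document; each statement's English description precedes it below -/
import Mathlib

section
/- Let 0 < β < δ be real numbers, set a = 1/(2δ) and b = 1/(β + δ) (so that 0 < a < b). Let g₁ : ℝ → ℝ be a continuous nonnegative function with support contained in the open interval (a, b) and ∫_ℝ g₁(r) dr = 1, and define g₂ : ℝ → ℝ by g₂(t) = ∫₀ᵗ (∫₀ˢ g₁(r) dr) ds. Then for every t with −β ≤ t < δ one has g₂(1/(δ − t)) = t/(δ(δ − t)) + g₂(1/δ). -/
open intervalIntegral MeasureTheory

/-- With `0 < β < δ`, `a = 1/(2δ)`, `b = 1/(β + δ)`, `g₁` continuous nonnegative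
supported in `(a, b)` with total integral 1, and `g₂` its twice-iterated integral,
one has `g₂(1/(δ − t)) = t/(δ(δ − t)) + g₂(1/δ)` for all `t ∈ [−β, δ)`. -/
theorem iterated_integral_boundary_identity
    (β δ : ℝ) (hβ : 0 < β) (hβδ : β < δ)
    (g₁ : ℝ → ℝ) (hcont : Continuous g₁) (hnonneg : ∀ r, 0 ≤ g₁ r)
    (hsupp : Function.support g₁ ⊆ Set.Ioo (1 / (2 * δ)) (1 / (β + δ)))
    (htotal : ∫ r, g₁ r = 1)
    (g₂ : ℝ → ℝ) (hg₂ : ∀ t, g₂ t = ∫ s in (0:ℝ)..t, ∫ r in (0:ℝ)..s, g₁ r) :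
    ∀ t, -β ≤ t → t < δ →
      g₂ (1 / (δ - t)) = t / (δ * (δ - t)) + g₂ (1 / δ) := by
  have hδ : 0 < δ := hβ.trans hβδ
  intro t ht1 ht2
  have hδt : 0 < δ - t := by linarith
  set b : ℝ := 1 / (β + δ) with hbdef
  have hb : 0 < b := by positivity
  -- the inner integral equals 1 beyond b
  have key : ∀ s, b ≤ s → (∫ r in (0:ℝ)..s, g₁ r) = 1 := by
    intro s hs
    rw [intervalIntegral.integral_of_le (hb.le.trans hs)]
    have : ∫ r in Set.Ioc (0:ℝ) s, g₁ r = ∫ r, g₁ r := by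
      apply MeasureTheory.setIntegral_eq_integral_of_forall_compl_eq_zero
      intro x hx
      by_contra h
      have hx' := hsupp h
      have ha : 0 < 1 / (2 * δ) := by positivity
      exact hx ⟨ha.trans hx'.1, hx'.2.le.trans hs⟩
    rw [this, htotal]
  set F : ℝ → ℝ := fun s => ∫ r in (0:ℝ)..s, g₁ r with hF
  have hFcont : Continuous F :=
    intervalIntegral.continuous_primitive (fun a b => hcont.intervalIntegrable a b) 0
  set x : ℝ := 1 / (δ - t) with hxdef
  set y : ℝ := 1 / δ with hydef
  have hbx : b ≤ x := by
    rw [hbdef, hxdef]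
    apply one_div_le_one_div_of_le hδt
    linarith
  have hby : b ≤ y := by
    rw [hbdef, hydef]
    apply one_div_le_one_div_of_le hδ
    linarith
  have hsplit : (∫ s in (0:ℝ)..y, F s) + (∫ s in y..x, F s) = ∫ s in (0:ℝ)..x, F s :=
    intervalIntegral.integral_add_adjacent_intervals
      (hFcont.intervalIntegrable _ _) (hFcont.intervalIntegrable _ _)
  have hmid : (∫ s in y..x, F s) = x - y := by
    have : (∫ s in y..x, F s) = ∫ s in y..x, (1:ℝ) := by
      apply intervalIntegral.integral_congr
      intro s hs
      exact key s (le_trans (le_min hby hbx) hs.1)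
    rw [this]; simp
  have hgx : g₂ x = g₂ y + (x - y) := by
    rw [hg₂ x, hg₂ y, ← hsplit, hmid]
  rw [hgx]
  have hxy : x - y = t / (δ * (δ - t)) := by
    rw [hxdef, hydef]
    field_simp
    ring_nf
  rw [hxy]; ring
end

section
/- Let 0 < β < δ be real numbers, set a = 1/(2δ) and b = 1/(β + δ) (so that 0 < a < b). Let g₁ : ℝ → ℝ be a continuous nonnegative function with support contained in the open interval (a, b) and ∫_ℝ g₁(r) dr = 1, and define g₂ : ℝ → ℝ by g₂(t) = ∫₀ᵗ (∫₀ˢ g₁(r) dr) ds. Then for every t with −β ≤ t < δ one has g₂(1/(δ − t)) > 0. -/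
open intervalIntegral MeasureTheory

/-- With `0 < β < δ`, `a = 1/(2δ)`, `b = 1/(β + δ)`, `g₁` continuous nonnegative
supported in `(a, b)` with total integral 1, and `g₂` its twice-iterated integral,
one has `g₂(1/(δ − t)) > 0` for all `t ∈ [−β, δ)`. -/
theorem iterated_integral_boundary_pos
    (β δ : ℝ) (hβ : 0 < β) (hβδ : β < δ)
    (g₁ : ℝ → ℝ) (hcont : Continuous g₁) (hnonneg : ∀ r, 0 ≤ g₁ r)
    (hsupp : Function.support g₁ ⊆ Set.Ioo (1 / (2 * δ)) (1 / (β + δ)))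
    (htotal : ∫ r, g₁ r = 1)
    (g₂ : ℝ → ℝ) (hg₂ : ∀ t, g₂ t = ∫ s in (0:ℝ)..t, ∫ r in (0:ℝ)..s, g₁ r) :
    ∀ t, -β ≤ t → t < δ → 0 < g₂ (1 / (δ - t)) := by
  have hδ : 0 < δ := hβ.trans hβδ
  set a : ℝ := 1 / (2 * δ) with ha_def
  set b : ℝ := 1 / (β + δ) with hb_def
  have ha : 0 < a := by positivity
  have hb : 0 < b := by positivity
  have hab : a < b := by
    rw [ha_def, hb_def]
    apply one_div_lt_one_div_of_lt (by positivity)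
    linarith
  have hzero : ∀ r, r ∉ Set.Ioo a b → g₁ r = 0 := by
    intro r hr
    by_contra h
    exact hr (hsupp h)
  set F : ℝ → ℝ := fun s => ∫ r in (0:ℝ)..s, g₁ r with hF_def
  have hFcont : Continuous F :=
    intervalIntegral.continuous_primitive (fun a b => hcont.intervalIntegrable a b) 0
  have hFint : ∀ x y : ℝ, IntervalIntegrable F volume x y :=
    fun x y => hFcont.intervalIntegrable x y
  have hFnonneg : ∀ s, 0 ≤ F s := by
    intro s
    rcases le_or_gt 0 s with hs | hs
    · exact intervalIntegral.integral_nonneg hs fun r _ => hnonneg r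
    · have heq : Set.EqOn g₁ 0 (Set.uIcc 0 s) := by
        intro r hr
        rw [Set.uIcc_of_ge hs.le] at hr
        exact hzero r (fun h => by have := h.1; have := hr.2; linarith)
      rw [hF_def]
      simp only
      rw [intervalIntegral.integral_congr heq]
      simp
  have hFb : F b = 1 := by
    rw [hF_def]
    simp only
    rw [intervalIntegral.integral_of_le hb.le,
      setIntegral_eq_integral_of_forall_compl_eq_zero (fun r hr => ?_), htotal]
    exact hzero r fun h => hr ⟨ha.trans h.1, h.2.le⟩
  -- find a small interval near b where F > 1/2
  have hop : IsOpen {s : ℝ | (1:ℝ)/2 < F s} := isOpen_lt continuous_const hFcont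
  have hbmem : b ∈ {s : ℝ | (1:ℝ)/2 < F s} := by simp [hFb]; norm_num
  obtain ⟨ε, hε, hball⟩ := Metric.isOpen_iff.mp hop b hbmem
  set ε' : ℝ := min (ε / 2) (b / 2) with hε'_def
  have hε' : 0 < ε' := lt_min (by linarith) (by linarith)
  have hε'ε : ε' < ε := (min_le_left _ _).trans_lt (by linarith)
  have hε'b : ε' ≤ b := (min_le_right _ _).trans (by linarith)
  have hposseg : ε' / 2 ≤ ∫ s in (b - ε')..b, F s := by
    have hmono : ∀ x ∈ Set.Icc (b - ε') b, (1:ℝ)/2 ≤ F x := by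
      intro x hx
      refine (hball ?_).le
      rw [Metric.mem_ball, Real.dist_eq, abs_lt]
      constructor <;> [linarith [hx.1]; linarith [hx.2]]
    calc ε' / 2 = ∫ _ in (b - ε')..b, (1:ℝ)/2 := by
          rw [intervalIntegral.integral_const, smul_eq_mul]; ring
      _ ≤ ∫ s in (b - ε')..b, F s := by
          apply intervalIntegral.integral_mono_on (by linarith)
            (intervalIntegrable_const) (hFint _ _) hmono
  have hg₂b : 0 < g₂ b := by
    rw [hg₂ b, ← intervalIntegral.integral_add_adjacent_intervals
      (hFint 0 (b - ε')) (hFint (b - ε') b)]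
    have h1 : 0 ≤ ∫ s in (0:ℝ)..(b - ε'), F s :=
      intervalIntegral.integral_nonneg (by linarith) fun s _ => hFnonneg s
    have : (0:ℝ) < ε' / 2 := by linarith
    linarith
  intro t ht htδ
  have hδt : 0 < δ - t := by linarith
  have hbx : b ≤ 1 / (δ - t) := by
    rw [hb_def]
    apply one_div_le_one_div_of_le hδt
    linarith
  have hsplit : g₂ (1 / (δ - t)) = g₂ b + ∫ s in b..(1 / (δ - t)), F s := by
    rw [hg₂, hg₂, ← intervalIntegral.integral_add_adjacent_intervals
      (hFint 0 b) (hFint b (1 / (δ - t)))]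
  have h2 : 0 ≤ ∫ s in b..(1 / (δ - t)), F s :=
    intervalIntegral.integral_nonneg hbx fun s _ => hFnonneg s
  rw [hsplit]
  linarith
end
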